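/- Let C ⊆ E be a convex set and let {T_α}_{α∈I} be a nonempty family of touching cones of C. Then the intersection ⋂_{α∈I} T_α is again a touching cone of C, and for every α̃ ∈ I with T_α̃ ≠ E, the intersection ⋂_{α∈I} T_α is a face of T_α̃. -/

import Mathlib

open scoped Pointwise RealInnerProductSpace

variable {E : Type*} [NormedAddCommGroup E] [InnerProductSpace ℝ E] [FiniteDimensional ℝ E]

/-- `F` is a face of the convex set `C`: a convex subset of `C` such that whenever an open
segment between two points of `C` meets `F`, both endpoints belong to `F`. -/
def IsFace (C F : Set E) : Prop :=
  Convex ℝ F ∧ F ⊆ C ∧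
    ∀ x ∈ C, ∀ y ∈ C, (openSegment ℝ x y ∩ F).Nonempty → x ∈ F ∧ y ∈ F

/-- The exposed face `F⊥(C,u)` of `C` by the vector `u`: the points of `C` where `⟨u,·⟩`
attains its supremum over `C`. -/
def expFace (C : Set E) (u : E) : Set E :=
  {x ∈ C | ∀ y ∈ C, ⟪u, y⟫ ≤ ⟪u, x⟫}

/-- `F` is an exposed face of `C`: either `∅`, or `C`, or `F⊥(C,u)` for some nonzero `u`. -/
def IsExpFace (C F : Set E) : Prop :=
  F = ∅ ∨ F = C ∨ ∃ u : E, u ≠ 0 ∧ F = expFace C u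

/-- The normal cone `N(C,x)` of `C` at the point `x`. -/
def normalCone (C : Set E) (x : E) : Set E :=
  {u | ∀ y ∈ C, ⟪u, y - x⟫ ≤ 0}

/-- The normal cone `N(C,F)` of `C` at a subset `F`; for a nonempty convex `F ⊆ C` it agrees
with `normalCone C x` for any `x` in the relative interior of `F` (all these coincide), and
for `F = ∅` it is all of `E`. -/
def normalConeOf (C F : Set E) : Set E :=
  ⋂ x ∈ intrinsicInterior ℝ F, normalCone C x

/-- `N` is a normal cone of `C`: the normal cone of some face of `C`. -/
def IsNormalCone (C N : Set E) : Prop :=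
  ∃ F, IsFace C F ∧ N = normalConeOf C F

/-- `T` is a touching cone of `C`: a nonempty face of a normal cone of `C`. -/
def IsTouchingCone (C T : Set E) : Prop :=
  T.Nonempty ∧ ∃ N, IsNormalCone C N ∧ IsFace N T

/-- The positive hull of a set: all finite nonnegative combinations (`posHull ∅ = {0}`). -/
def posHull (S : Set E) : Set E :=
  {x | ∃ (k : ℕ) (c : Fin k → ℝ) (s : Fin k → E),
    (∀ i, 0 ≤ c i) ∧ (∀ i, s i ∈ S) ∧ x = ∑ i, c i • s i}

/-- A vector `u` is sharp normal for `C` if every `x ∈ ri(F⊥(C,u))` satisfies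
`u ∈ ri(N(C,x))`. -/
def SharpNormal (C : Set E) (u : E) : Prop :=
  ∀ x ∈ intrinsicInterior ℝ (expFace C u), u ∈ intrinsicInterior ℝ (normalCone C x)

/-- A point `x` is sharp exposed in `C` if every nonzero `u ∈ ri(N(C,x))` satisfies
`x ∈ ri(F⊥(C,u))`. -/
def SharpExposed (C : Set E) (x : E) : Prop :=
  ∀ u ∈ intrinsicInterior ℝ (normalCone C x), u ≠ 0 → x ∈ intrinsicInterior ℝ (expFace C u)

/-- The smallest exposed face of `C` containing `F`: the intersection of all exposed faces
of `C` containing `F`. -/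
def supExp (C F : Set E) : Set E :=
  ⋂₀ {G | IsExpFace C G ∧ F ⊆ G}

/-- The polar body of `K`. -/
def polarBody (K : Set E) : Set E := {u | ∀ y ∈ K, ⟪u, y⟫ ≤ 1}


set_option linter.unusedSectionVars false

section AuxTC

private lemma aux_nonpos_eq_zero {a b s t : ℝ} (ha : 0 < a) (hb : 0 < b)
    (hs : s ≤ 0) (ht : t ≤ 0) (h : a * s + b * t = 0) : s = 0 := by nlinarith

/-- Prolongation: a relative interior point of `S` lies on an open segment from any point
of `S` to another point of `S`. -/
private lemma prolong {S : Set E} {x y : E}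
    (hx : x ∈ intrinsicInterior ℝ S) (hy : y ∈ S) :
    ∃ z ∈ S, x ∈ openSegment ℝ y z := by
  obtain ⟨x', hx', hx'e⟩ := hx
  subst hx'e
  rw [mem_interior_iff_mem_nhds, Metric.mem_nhds_iff] at hx'
  obtain ⟨ε, hε, hball⟩ := hx'
  set d : ℝ := dist (x' : E) y with hd
  have hd0 : (0:ℝ) ≤ d := dist_nonneg
  set t : ℝ := ε / (2 * (d + 1)) with ht
  have ht0 : 0 < t := by positivity
  set z : E := t • ((x' : E) - y) + (x' : E) with hz
  have hzspan : z ∈ affineSpan ℝ S := by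
    have h := AffineSubspace.smul_vsub_vadd_mem (affineSpan ℝ S) t x'.2
      (subset_affineSpan ℝ S hy) x'.2
    simpa [vsub_eq_sub, vadd_eq_add, hz] using h
  have hdist : dist z (x' : E) = t * d := by
    rw [dist_eq_norm, hz]
    simp only [add_sub_cancel_right]
    rw [norm_smul, Real.norm_eq_abs, abs_of_pos ht0, hd, dist_eq_norm]
  have hzS : z ∈ S := by
    have hmem : (⟨z, hzspan⟩ : affineSpan ℝ S) ∈ Metric.ball x' ε := by
      rw [Metric.mem_ball, Subtype.dist_eq]
      rw [hdist]
      have : t * d ≤ t * (d + 1) := by nlinarith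
      have h2 : t * (d + 1) = ε / 2 := by rw [ht]; field_simp
      linarith
    exact hball hmem
  refine ⟨z, hzS, ⟨t / (1 + t), 1 / (1 + t), by positivity, by positivity, ?_, ?_⟩⟩
  · field_simp; ring
  · rw [hz]
    match_scalars <;> (field_simp; try ring)

private lemma normalCone_convex (C : Set E) (x : E) : Convex ℝ (normalCone C x) := by
  intro u hu v hv a b ha hb hab y hy
  have h1 := hu y hy
  have h2 := hv y hy
  show ⟪a • u + b • v, y - x⟫ ≤ 0
  rw [inner_add_left, real_inner_smul_left, real_inner_smul_left]
  nlinarith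

private lemma normalConeOf_convex (C F : Set E) : Convex ℝ (normalConeOf C F) :=
  convex_iInter fun x => convex_iInter fun _ => normalCone_convex C x

private lemma normalConeOf_empty (C : Set E) : normalConeOf C (∅ : Set E) = Set.univ := by
  simp [normalConeOf, intrinsicInterior_empty]

private lemma isFace_refl {K : Set E} (hK : Convex ℝ K) : IsFace K K :=
  ⟨hK, subset_rfl, fun x hx y hy _ => ⟨hx, hy⟩⟩

private lemma isFace_empty {K : Set E} : IsFace K (∅ : Set E) := by
  refine ⟨convex_empty, Set.empty_subset _, ?_⟩
  rintro x _ y _ ⟨p, _, hp⟩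
  exact absurd hp (Set.notMem_empty p)

private lemma isFace_iInter {K : Set E} {ι : Type*} [Nonempty ι] {f : ι → Set E}
    (h : ∀ i, IsFace K (f i)) : IsFace K (⋂ i, f i) := by
  refine ⟨convex_iInter fun i => (h i).1,
    (Set.iInter_subset f (Classical.arbitrary ι)).trans (h _).2.1, ?_⟩
  rintro x hx y hy ⟨p, hp1, hp2⟩
  rw [Set.mem_iInter] at hp2
  constructor <;> · rw [Set.mem_iInter]; intro i
                    first
                    | exact ((h i).2.2 x hx y hy ⟨p, hp1, hp2 i⟩).1
                    | exact ((h i).2.2 x hx y hy ⟨p, hp1, hp2 i⟩).2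

private lemma face_univ_eq {T : Set E} (h : IsFace (Set.univ : Set E) T)
    (hne : T.Nonempty) : T = Set.univ := by
  obtain ⟨z, hz⟩ := hne
  ext w
  simp only [Set.mem_univ, iff_true]
  refine (h.2.2 w trivial ((2:ℝ) • z - w) trivial ⟨z, ?_, hz⟩).1
  exact ⟨1/2, 1/2, by norm_num, by norm_num, by norm_num, by module⟩

private lemma touchingCone_zero_mem {C T : Set E} (h : IsTouchingCone C T) : (0:E) ∈ T := by
  obtain ⟨⟨v, hv⟩, N, ⟨G, hG, rfl⟩, hface⟩ := h
  have h0 : (0:E) ∈ normalConeOf C G := by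
    refine Set.mem_iInter₂.2 fun x _ y _ => ?_
    simp
  have hvN : v ∈ normalConeOf C G := hface.2.1 hv
  have h2v : (2:ℝ) • v ∈ normalConeOf C G := by
    refine Set.mem_iInter₂.2 fun x hx y hy => ?_
    have := Set.mem_iInter₂.1 hvN x hx y hy
    show ⟪(2:ℝ) • v, y - x⟫ ≤ 0
    rw [real_inner_smul_left]
    linarith
  refine (hface.2.2 0 h0 ((2:ℝ) • v) h2v ⟨v, ?_, hv⟩).1
  exact ⟨1/2, 1/2, by norm_num, by norm_num, by norm_num, by module⟩

private lemma expFace_subset (C : Set E) (u : E) : expFace C u ⊆ C := fun _ hx => hx.1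

private lemma mem_expFace_iff_normalCone {C : Set E} {u x : E} :
    x ∈ expFace C u ↔ x ∈ C ∧ u ∈ normalCone C x := by
  constructor
  · rintro ⟨hx, h⟩
    refine ⟨hx, fun y hy => ?_⟩
    rw [inner_sub_right]
    linarith [h y hy]
  · rintro ⟨hx, h⟩
    refine ⟨hx, fun y hy => ?_⟩
    have := h y hy
    rw [inner_sub_right] at this
    linarith

private lemma expFace_isFace {C : Set E} (hC : Convex ℝ C) (u : E) : IsFace C (expFace C u) := by
  refine ⟨?_, fun x hx => hx.1, ?_⟩
  · intro x hx y hy a b ha hb hab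
    refine ⟨hC hx.1 hy.1 ha hb hab, fun w hw => ?_⟩
    rw [inner_add_right, real_inner_smul_right, real_inner_smul_right]
    have h1 := hx.2 w hw
    have h2 := hy.2 w hw
    have h1' : a * ⟪u, w⟫ ≤ a * ⟪u, x⟫ := mul_le_mul_of_nonneg_left h1 ha
    have h2' : b * ⟪u, w⟫ ≤ b * ⟪u, y⟫ := mul_le_mul_of_nonneg_left h2 hb
    have hid : a * ⟪u, w⟫ + b * ⟪u, w⟫ = ⟪u, w⟫ := by rw [← add_mul, hab, one_mul]
    linarith
  · rintro x hx y hy ⟨p, ⟨a, b, ha, hb, hab, hp⟩, hpF⟩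
    have hxP := hpF.2 x hx
    have hyP := hpF.2 y hy
    have hpe : ⟪u, p⟫ = a * ⟪u, x⟫ + b * ⟪u, y⟫ := by
      rw [← hp, inner_add_right, real_inner_smul_right, real_inner_smul_right]
    have hxp : ⟪u, p⟫ ≤ ⟪u, x⟫ := by
      have hby : b * ⟪u, y⟫ ≤ b * ⟪u, p⟫ := mul_le_mul_of_nonneg_left hyP hb.le
      have hid : a * ⟪u, p⟫ + b * ⟪u, p⟫ = ⟪u, p⟫ := by rw [← add_mul, hab, one_mul]
      have key : a * ⟪u, p⟫ ≤ a * ⟪u, x⟫ := by linarith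
      exact le_of_mul_le_mul_left key ha
    have hyp : ⟪u, p⟫ ≤ ⟪u, y⟫ := by
      have hax : a * ⟪u, x⟫ ≤ a * ⟪u, p⟫ := mul_le_mul_of_nonneg_left hxP ha.le
      have hid : a * ⟪u, p⟫ + b * ⟪u, p⟫ = ⟪u, p⟫ := by rw [← add_mul, hab, one_mul]
      have key : b * ⟪u, p⟫ ≤ b * ⟪u, y⟫ := by linarith
      exact le_of_mul_le_mul_left key hb
    constructor
    · refine ⟨hx, fun w hw => ?_⟩
      have hwP := hpF.2 w hw
      linarith
    · refine ⟨hy, fun w hw => ?_⟩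
      have hwP := hpF.2 w hw
      linarith

/-- Core computation: if `p, x, y` all lie in the normal cone at `x₀ ∈ C`, `p` is a strictly
positive combination of `x` and `y`, and `p` also lies in the normal cone at `x' ∈ C`, then
`x` lies in the normal cone at `x'`. -/
private lemma core_lemma {C : Set E} {x₀ x' p x y : E} (hx₀C : x₀ ∈ C) (hx'C : x' ∈ C)
    (hp₀ : p ∈ normalCone C x₀) (hx₀ : x ∈ normalCone C x₀) (hy₀ : y ∈ normalCone C x₀)
    (hp' : p ∈ normalCone C x') {a b : ℝ} (ha : 0 < a) (hb : 0 < b)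
    (hcomb : a • x + b • y = p) : x ∈ normalCone C x' := by
  have h1 : ⟪p, x' - x₀⟫ ≤ 0 := hp₀ x' hx'C
  have h2 : ⟪p, x₀ - x'⟫ ≤ 0 := hp' x₀ hx₀C
  have h3 : ⟪p, x' - x₀⟫ = 0 := by
    rw [inner_sub_right] at h1 h2 ⊢
    linarith
  have hx1 : ⟪x, x' - x₀⟫ ≤ 0 := hx₀ x' hx'C
  have hy1 : ⟪y, x' - x₀⟫ ≤ 0 := hy₀ x' hx'C
  have hsum : a * ⟪x, x' - x₀⟫ + b * ⟪y, x' - x₀⟫ = 0 := by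
    rw [← real_inner_smul_left, ← real_inner_smul_left, ← inner_add_left, hcomb, h3]
  have hx0 : ⟪x, x' - x₀⟫ = 0 := aux_nonpos_eq_zero ha hb hx1 hy1 hsum
  intro w hwC
  have hw := hx₀ w hwC
  have split : ⟪x, w - x'⟫ = ⟪x, w - x₀⟫ - ⟪x, x' - x₀⟫ := by
    rw [← inner_sub_right]
    congr 1
    abel
  rw [split, hx0]
  linarith

/-- The normal cone at a relative interior point of a subset `F ⊆ C` is contained in the
normal cone at any point of `F`. -/
private lemma normalCone_antitone_on_face {C F : Set E} (hFC : F ⊆ C) {x₀ x'' w : E}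
    (hx₀ : x₀ ∈ F) (hx'' : x'' ∈ intrinsicInterior ℝ F)
    (hw : w ∈ normalCone C x'') : w ∈ normalCone C x₀ := by
  obtain ⟨q, hqF, ⟨a, b, ha, hb, hab, hcomb⟩⟩ := prolong hx'' hx₀
  have h1 : ⟪w, x₀ - x''⟫ ≤ 0 := hw x₀ (hFC hx₀)
  have h2 : ⟪w, q - x''⟫ ≤ 0 := hw q (hFC hqF)
  have hzc : a • (x₀ - x'') + b • (q - x'') = 0 := by
    have h4 : a • (x₀ - x'') + b • (q - x'') = (a • x₀ + b • q) - (a + b) • x'' := by module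
    rw [h4, hcomb, hab, one_smul, sub_self]
  have hsum : a * ⟪w, x₀ - x''⟫ + b * ⟪w, q - x''⟫ = 0 := by
    rw [← real_inner_smul_right, ← real_inner_smul_right, ← inner_add_right, hzc,
      inner_zero_right]
  have h10 : ⟪w, x₀ - x''⟫ = 0 := aux_nonpos_eq_zero ha hb h1 h2 hsum
  intro y hy
  have := hw y hy
  have split : ⟪w, y - x₀⟫ = ⟪w, y - x''⟫ - ⟪w, x₀ - x''⟫ := by
    rw [← inner_sub_right]
    congr 1
    abel
  rw [split, h10]
  linarith

end AuxTC

/-- A nonempty family of touching cones of a convex set `C` has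
intersection a touching cone of `C`, and the intersection is a face of every member
`T α̃` with `T α̃ ≠ E`. -/
theorem stmt_15 (C : Set E) (hC : Convex ℝ C) {ι : Type*} [Nonempty ι]
    (T : ι → Set E) (hT : ∀ α, IsTouchingCone C (T α)) :
    IsTouchingCone C (⋂ α, T α) ∧
    ∀ α, T α ≠ Set.univ → IsFace (T α) (⋂ α', T α') := by
  classical
  have hTconv : ∀ α, Convex ℝ (T α) := by
    intro α
    obtain ⟨-, N, -, hface⟩ := hT α
    exact hface.1
  have hSconv : Convex ℝ (⋂ α, T α) := convex_iInter hTconv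
  have hzero : ∀ α, (0:E) ∈ T α := fun α => touchingCone_zero_mem (hT α)
  have hSne : (⋂ α, T α).Nonempty := ⟨0, Set.mem_iInter.2 hzero⟩
  by_cases hA : ∀ α, T α = Set.univ
  · have hSuniv : (⋂ α, T α) = Set.univ := by simp [hA]
    refine ⟨⟨hSne, Set.univ, ⟨∅, isFace_empty, (normalConeOf_empty C).symm⟩,
      by rw [hSuniv]; exact isFace_refl convex_univ⟩, ?_⟩
    intro α hα
    exact absurd (hA α) hα
  · push_neg at hA
    obtain ⟨β, hβ⟩ := hA
    have hT' : ∀ α, ∃ N, (∃ G, IsFace C G ∧ N = normalConeOf C G) ∧ IsFace N (T α) :=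
      fun α => (hT α).2
    choose N hNnc hNface using hT'
    choose G hGface hNG using hNnc
    have hTne : ∀ α, (T α).Nonempty := fun α => (hT α).1
    have hTsubN : ∀ α, T α ⊆ N α := fun α => (hNface α).2.1
    have hNsub : ∀ α, ∀ x ∈ intrinsicInterior ℝ (G α), N α ⊆ normalCone C x := by
      intro α x hx
      rw [hNG α]
      exact Set.biInter_subset_of_mem hx
    have hGne : ∀ α, T α ≠ Set.univ → (G α).Nonempty := by
      intro α hα
      rw [Set.nonempty_iff_ne_empty]
      intro hGe
      apply hα
      apply face_univ_eq _ (hTne α)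
      have hNu : N α = Set.univ := by rw [hNG α, hGe, normalConeOf_empty]
      rw [← hNu]
      exact hNface α
    obtain ⟨u, hu⟩ := Set.Nonempty.intrinsicInterior hSconv hSne
    have huS : u ∈ ⋂ α, T α := intrinsicInterior_subset hu
    have huT : ∀ α, u ∈ T α := Set.mem_iInter.1 huS
    have huN : ∀ α, ∀ x ∈ intrinsicInterior ℝ (G α), u ∈ normalCone C x :=
      fun α x hx => hNsub α x hx (hTsubN α (huT α))
    have hGC : ∀ α, G α ⊆ C := fun α => (hGface α).2.1
    have hriGF : ∀ α, ∀ x ∈ intrinsicInterior ℝ (G α), x ∈ expFace C u := by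
      intro α x hx
      exact mem_expFace_iff_normalCone.2 ⟨hGC α (intrinsicInterior_subset hx), huN α x hx⟩
    set F := expFace C u with hF
    have hFC : F ⊆ C := expFace_subset C u
    have hFface : IsFace C F := expFace_isFace hC u
    have hFconv : Convex ℝ F := hFface.1
    obtain ⟨x₀, hx₀⟩ := Set.Nonempty.intrinsicInterior (hGface β).1 (hGne β hβ)
    have hFne : F.Nonempty := ⟨x₀, hriGF β x₀ hx₀⟩
    obtain ⟨x'', hx''⟩ := Set.Nonempty.intrinsicInterior hFconv hFne
    set Nstar := normalConeOf C F with hNstar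
    have hNstarConv : Convex ℝ Nstar := normalConeOf_convex C F
    have hNstarSub : ∀ x ∈ intrinsicInterior ℝ F, Nstar ⊆ normalCone C x :=
      fun x hx => Set.biInter_subset_of_mem hx
    -- Claim 1 : every point of the intersection is in the normal cone at every point of F
    have claim1 : ∀ v ∈ ⋂ α, T α, ∀ x' ∈ F, v ∈ normalCone C x' := by
      intro v hv x' hx'
      obtain ⟨z, hzS, ⟨a, b, ha, hb, hab, hcomb⟩⟩ := prolong hu hv
      refine core_lemma (hGC β (intrinsicInterior_subset hx₀)) (hFC hx')
        (huN β x₀ hx₀) (hNsub β x₀ hx₀ (hTsubN β (Set.mem_iInter.1 hv β)))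
        (hNsub β x₀ hx₀ (hTsubN β (Set.mem_iInter.1 hzS β)))
        (mem_expFace_iff_normalCone.1 hx').2 ha hb hcomb
    have hSNstar : (⋂ α, T α) ⊆ Nstar := by
      intro v hv
      exact Set.mem_iInter₂.2 fun x hx => claim1 v hv x (intrinsicInterior_subset hx)
    -- Claim 2 : Nstar is contained in the normal cone at every point of F
    have claim2 : ∀ x₀' ∈ F, Nstar ⊆ normalCone C x₀' := by
      intro x₀' hx₀' w hw
      exact normalCone_antitone_on_face hFC hx₀' hx'' (hNstarSub x'' hx'' hw)
    have hNstarN : ∀ α, T α ≠ Set.univ → Nstar ⊆ N α := by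
      intro α hα
      rw [hNG α]
      exact Set.subset_iInter₂ fun x hx => claim2 x (hriGF α x hx)
    have hfaces : ∀ α, IsFace Nstar (T α ∩ Nstar) := by
      intro α
      by_cases hα : T α = Set.univ
      · rw [hα, Set.univ_inter]
        exact isFace_refl hNstarConv
      · refine ⟨(hTconv α).inter hNstarConv, Set.inter_subset_right, ?_⟩
        rintro x hx y hy ⟨p, hp1, hp2⟩
        obtain ⟨hxT, hyT⟩ := (hNface α).2.2 x (hNstarN α hα hx) y (hNstarN α hα hy)
          ⟨p, hp1, hp2.1⟩
        exact ⟨⟨hxT, hx⟩, ⟨hyT, hy⟩⟩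
    have hSeq : (⋂ α, T α) = ⋂ α, (T α ∩ Nstar) := by
      ext w
      simp only [Set.mem_iInter, Set.mem_inter_iff]
      constructor
      · intro h
        exact fun α => ⟨h α, hSNstar (Set.mem_iInter.2 h)⟩
      · intro h
        exact fun α => (h α).1
    have hSfaceNstar : IsFace Nstar (⋂ α, T α) := by
      rw [hSeq]
      exact isFace_iInter hfaces
    refine ⟨⟨hSne, Nstar, ⟨F, hFface, rfl⟩, hSfaceNstar⟩, ?_⟩
    intro α hα
    refine ⟨hSconv, Set.iInter_subset T α, ?_⟩
    rintro x hxT y hyT ⟨p, hpseg, hpS⟩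
    obtain ⟨a, b, ha, hb, hab, hcomb⟩ := hpseg
    obtain ⟨xα, hxα⟩ := Set.Nonempty.intrinsicInterior (hGface α).1 (hGne α hα)
    have hxαC : xα ∈ C := hGC α (intrinsicInterior_subset hxα)
    have hpN : p ∈ normalCone C xα := hNsub α xα hxα (hTsubN α (Set.mem_iInter.1 hpS α))
    have hxN : x ∈ normalCone C xα := hNsub α xα hxα (hTsubN α hxT)
    have hyN : y ∈ normalCone C xα := hNsub α xα hxα (hTsubN α hyT)
    have hxNstar : x ∈ Nstar := by
      refine Set.mem_iInter₂.2 fun x' hx' => ?_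
      exact core_lemma hxαC (hFC (intrinsicInterior_subset hx')) hpN hxN hyN
        (hNstarSub x' hx' (hSNstar hpS)) ha hb hcomb
    have hyNstar : y ∈ Nstar := by
      refine Set.mem_iInter₂.2 fun x' hx' => ?_
      exact core_lemma hxαC (hFC (intrinsicInterior_subset hx')) hpN hyN hxN
        (hNstarSub x' hx' (hSNstar hpS)) hb ha (by rw [← hcomb]; abel)
    exact hSfaceNstar.2.2 x hxNstar y hyNstar ⟨p, ⟨a, b, ha, hb, hab, hcomb⟩, hpS⟩
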